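/- Let ρ₁, ρ₂ > 0, α := 1/ρ₁ − 1/ρ₂, and ρ(c) := ( c/ρ₁ + (1−c)/ρ₂ )⁻¹. Let f₀ : ℝ → ℝ be continuously differentiable and let C : ℝ → ℝ be twice continuously differentiable with C(z)/ρ₁ + (1−C(z))/ρ₂ > 0 for all z ∈ ℝ. Suppose C satisfies, for all z, 0 = f₀'(C(z)) − (1/ρ(C(z)))·(d/dz)( ρ(C(z))·C'(z) ) − α·ρ(C(z))·(C'(z))². Then C''(z) = f₀'(C(z)) for all z ∈ ℝ, and consequently the function z ↦ f₀(C(z)) − (1/2)(C'(z))² is constant on ℝ. -/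

import Mathlib

/-- Reduction of the Lee–Lowengrub–Goodman inner-profile ODE: the density terms cancel,
so the profile satisfies `C'' = f₀'(C)` and `f₀(C) − (1/2)(C')²` is constant. -/
theorem llg_profile_reduction (ρ₁ ρ₂ : ℝ) (h1 : 0 < ρ₁) (h2 : 0 < ρ₂)
    (α : ℝ) (hα : α = 1/ρ₁ - 1/ρ₂)
    (ρ : ℝ → ℝ) (hρ : ρ = fun c => (c/ρ₁ + (1-c)/ρ₂)⁻¹)
    (f₀ : ℝ → ℝ) (hf₀ : ContDiff ℝ 1 f₀)
    (C : ℝ → ℝ) (hC : ContDiff ℝ 2 C)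
    (hpos : ∀ z : ℝ, 0 < C z / ρ₁ + (1 - C z) / ρ₂)
    (hODE : ∀ z : ℝ, 0 = deriv f₀ (C z)
      - (1 / ρ (C z)) * deriv (fun w => ρ (C w) * deriv C w) z
      - α * ρ (C z) * (deriv C z)^2) :
    (∀ z : ℝ, deriv (deriv C) z = deriv f₀ (C z)) ∧
    (∀ z w : ℝ, f₀ (C z) - (1/2) * (deriv C z)^2
      = f₀ (C w) - (1/2) * (deriv C w)^2) := by
  have hC1 : Differentiable ℝ C := (hC.of_le one_le_two).differentiable one_ne_zero
  have hC' : ContDiff ℝ 1 (deriv C) :=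
    (contDiff_succ_iff_deriv.mp (show ContDiff ℝ (1+1) C by norm_num; exact hC)).2.2
  have hCd' : Differentiable ℝ (deriv C) := hC'.differentiable one_ne_zero
  set g : ℝ → ℝ := fun c => α * c + 1/ρ₂ with hg
  have hgC : ∀ z : ℝ, C z / ρ₁ + (1 - C z)/ρ₂ = g (C z) := by
    intro z; simp only [hg, hα]; field_simp; ring
  have hgpos : ∀ z : ℝ, 0 < g (C z) := fun z => (hgC z) ▸ hpos z
  have hρC : ∀ z : ℝ, ρ (C z) = (g (C z))⁻¹ := by
    intro z; rw [hρ]; simp only [hgC z]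
  have main : ∀ z : ℝ, deriv (deriv C) z = deriv f₀ (C z) := by
    intro z
    have hCz : HasDerivAt C (deriv C z) z := (hC1 z).hasDerivAt
    have hC'z : HasDerivAt (deriv C) (deriv (deriv C) z) z := (hCd' z).hasDerivAt
    have hgz : HasDerivAt (fun w => g (C w)) (α * deriv C z) z := by
      simpa [hg, one_div] using (hCz.const_mul α).add_const (1/ρ₂)
    have hne : g (C z) ≠ 0 := (hgpos z).ne'
    have hinv : HasDerivAt (fun w => (g (C w))⁻¹)
        (-(α * deriv C z) / (g (C z))^2) z := hgz.inv hne
    have hmul := hinv.mul hC'z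
    have hder : deriv (fun w => ρ (C w) * deriv C w) z
        = -(α * deriv C z) / (g (C z))^2 * deriv C z + (g (C z))⁻¹ * deriv (deriv C) z := by
      rw [show (fun w => ρ (C w) * deriv C w) = fun w => (g (C w))⁻¹ * deriv C w from
        funext fun w => by rw [hρC w]]
      exact hmul.deriv
    have h0 := hODE z
    rw [hder, hρC z] at h0
    field_simp at h0
    have h4 : (deriv f₀ (C z) - deriv (deriv C) z) * (g (C z))^4 = 0 := by
      linear_combination (-(g (C z))^3) * h0
    rcases mul_eq_zero.mp h4 with h | h
    · linarith
    · exact absurd h (pow_ne_zero 4 hne)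
  refine ⟨main, ?_⟩
  have hf₀d : Differentiable ℝ f₀ := hf₀.differentiable one_ne_zero
  have hDiff : Differentiable ℝ (fun z => f₀ (C z) - (1/2) * (deriv C z)^2) :=
    (hf₀d.comp hC1).sub ((hCd'.pow 2).const_mul (1/2))
  have hE : ∀ z : ℝ, deriv (fun z => f₀ (C z) - (1/2) * (deriv C z)^2) z = 0 := by
    intro z
    have h1 : HasDerivAt (fun z => f₀ (C z)) (deriv f₀ (C z) * deriv C z) z :=
      (hf₀d (C z)).hasDerivAt.comp z (hC1 z).hasDerivAt
    have h2 : HasDerivAt (fun z => (1/2 : ℝ) * (deriv C z)^2)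
        ((1/2 : ℝ) * (2 * deriv C z ^ 1 * deriv (deriv C) z)) z :=
      ((hCd' z).hasDerivAt.pow 2).const_mul (1/2)
    rw [(show HasDerivAt (fun z => f₀ (C z) - (1/2) * (deriv C z)^2) _ z from h1.sub h2).deriv, main z]; ring
  intro z w
  exact is_const_of_deriv_eq_zero hDiff hE z w
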